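/- Let L be a Lie algebra over a field E of characteristic zero, I a ℚ-ideal of L, f a ℚ-Lie-algebra automorphism of L, and σ a field automorphism of E. Then N(I,f,σ) = { Σᵢ xᵢ ⊗ aᵢ ∈ E ⊗_ℚ I : Σᵢ σ(xᵢ)·f(aᵢ) = 0 } is a well-defined entangled ideal of the E-Lie algebra E ⊗_ℚ L. -/

import Mathlib

open scoped TensorProduct

/-- The ℚ-linear map `E ⊗_ℚ L → L` induced by the ℚ-bilinear map `(x, a) ↦ σ(x) • f(a)`,
for a field automorphism `σ` of `E` and a ℚ-Lie automorphism `f` of `L`. -/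
noncomputable def sigmaFLift (E L : Type) [Field E] [CharZero E] [LieRing L]
    [LieAlgebra E L] [LieAlgebra ℚ L] [IsScalarTower ℚ E L]
    (σ : E ≃ₐ[ℚ] E) (f : L ≃ₗ⁅ℚ⁆ L) : E ⊗[ℚ] L →ₗ[ℚ] L :=
  TensorProduct.lift
    (LinearMap.mk₂ ℚ (fun x a => σ x • f a)
      (fun x y a => by (try dsimp only); rw [map_add, add_smul])
      (fun q x a => by (try dsimp only); rw [show σ (q • x) = q • σ x from map_smul σ.toLinearEquiv q x, smul_assoc])
      (fun x a b => by (try dsimp only); rw [show f (a + b) = f a + f b from map_add f.toLinearEquiv a b, smul_add])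
      (fun q x a => by (try dsimp only); rw [show f (q • a) = q • f a from map_smul f.toLinearEquiv q a, smul_comm]))

/-- `N(I,f,σ)`, as a subset of `E ⊗_ℚ L`: the elements of `E ⊗_ℚ I` on which the induced
map `Σᵢ xᵢ ⊗ aᵢ ↦ Σᵢ σ(xᵢ) • f(aᵢ)` vanishes. -/
noncomputable def entangledSet (E L : Type) [Field E] [CharZero E] [LieRing L]
    [LieAlgebra E L] [LieAlgebra ℚ L] [IsScalarTower ℚ E L]
    (I : LieIdeal ℚ L) (f : L ≃ₗ⁅ℚ⁆ L) (σ : E ≃ₐ[ℚ] E) : Set (E ⊗[ℚ] L) :=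
  {n | n ∈ LinearMap.range
        (TensorProduct.map (LinearMap.id : E →ₗ[ℚ] E) (I : Submodule ℚ L).subtype) ∧
      sigmaFLift E L σ f n = 0}

section Aux

variable (E L : Type) [Field E] [CharZero E] [LieRing L] [LieAlgebra E L]
    [LieAlgebra ℚ L] [IsScalarTower ℚ E L]

lemma sigmaFLift_tmul (σ : E ≃ₐ[ℚ] E) (f : L ≃ₗ⁅ℚ⁆ L) (x : E) (a : L) :
    sigmaFLift E L σ f (x ⊗ₜ[ℚ] a) = σ x • f a := rfl

lemma sigmaFLift_smul (σ : E ≃ₐ[ℚ] E) (f : L ≃ₗ⁅ℚ⁆ L) (c : E) (n : E ⊗[ℚ] L) :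
    sigmaFLift E L σ f (c • n) = σ c • sigmaFLift E L σ f n := by
  induction n using TensorProduct.induction_on with
  | zero => simp
  | tmul x a =>
      rw [TensorProduct.smul_tmul', smul_eq_mul, sigmaFLift_tmul, sigmaFLift_tmul,
        map_mul, mul_smul]
  | add m n hm hn => rw [smul_add, map_add, hm, hn, map_add, smul_add]

lemma sigmaFLift_lie (σ : E ≃ₐ[ℚ] E) (f : L ≃ₗ⁅ℚ⁆ L) (z n : E ⊗[ℚ] L) :
    sigmaFLift E L σ f ⁅z, n⁆ = ⁅sigmaFLift E L σ f z, sigmaFLift E L σ f n⁆ := by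
  induction z using TensorProduct.induction_on with
  | zero => simp
  | add z₁ z₂ h₁ h₂ => rw [add_lie, map_add, h₁, h₂, map_add, add_lie]
  | tmul x a =>
      induction n using TensorProduct.induction_on with
      | zero => simp
      | add n₁ n₂ h₁ h₂ => rw [lie_add, map_add, h₁, h₂, map_add, lie_add]
      | tmul y b =>
          rw [LieAlgebra.ExtendScalars.bracket_tmul, sigmaFLift_tmul, sigmaFLift_tmul,
            sigmaFLift_tmul, map_mul, smul_lie, lie_smul, mul_smul]
          congr 1
          congr 1
          exact f.map_lie a b

end Aux

/-- For a ℚ-ideal `I` of `L`, a ℚ-Lie automorphism `f` of `L` and a field automorphism `σ`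
of `E`, the set `N(I,f,σ) = { Σᵢ xᵢ ⊗ aᵢ ∈ E ⊗_ℚ I : Σᵢ σ(xᵢ)·f(aᵢ) = 0 }` is a
well-defined entangled ideal of the `E`-Lie algebra `E ⊗_ℚ L`. -/
theorem entangledSet_is_entangled_ideal
    (E L : Type) [Field E] [CharZero E] [LieRing L] [LieAlgebra E L]
    [LieAlgebra ℚ L] [IsScalarTower ℚ E L]
    (I : LieIdeal ℚ L) (f : L ≃ₗ⁅ℚ⁆ L) (σ : E ≃ₐ[ℚ] E) :
    ∃ N : LieIdeal E (E ⊗[ℚ] L),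
      (N : Set (E ⊗[ℚ] L)) = entangledSet E L I f σ ∧
      ∀ a : L, (1 : E) ⊗ₜ[ℚ] a ∈ N → a = 0 := by
  set R := LinearMap.range
      (TensorProduct.map (LinearMap.id : E →ₗ[ℚ] E) (I : Submodule ℚ L).subtype) with hR
  -- R is stable under E-scalar multiplication
  have hRsmul : ∀ (c : E) {n : E ⊗[ℚ] L}, n ∈ R → c • n ∈ R := by
    intro c n hn
    obtain ⟨m, rfl⟩ := hn
    induction m using TensorProduct.induction_on with
    | zero => exact ⟨0, by rw [map_zero, smul_zero]⟩
    | tmul x b =>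
        exact ⟨(c * x) ⊗ₜ[ℚ] b, by
          rw [TensorProduct.map_tmul, TensorProduct.map_tmul, TensorProduct.smul_tmul', smul_eq_mul]; rfl⟩
    | add m₁ m₂ h₁ h₂ =>
        rw [map_add, smul_add]
        exact R.add_mem h₁ h₂
  -- R is stable under bracket with anything
  have hRlie : ∀ (z : E ⊗[ℚ] L) {n : E ⊗[ℚ] L}, n ∈ R → ⁅z, n⁆ ∈ R := by
    intro z n hn
    obtain ⟨m, rfl⟩ := hn
    induction m using TensorProduct.induction_on with
    | zero => exact ⟨0, by rw [map_zero, lie_zero]⟩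
    | add m₁ m₂ h₁ h₂ =>
        rw [map_add, lie_add]
        exact R.add_mem h₁ h₂
    | tmul y b =>
        induction z using TensorProduct.induction_on with
        | zero => simp
        | add z₁ z₂ h₁ h₂ =>
            rw [add_lie]
            exact R.add_mem h₁ h₂
        | tmul x a =>
            refine ⟨(x * y) ⊗ₜ[ℚ] ⟨⁅a, (b : L)⁆, I.lie_mem b.2⟩, ?_⟩
            rw [TensorProduct.map_tmul, TensorProduct.map_tmul, LieAlgebra.ExtendScalars.bracket_tmul]; rfl
  refine ⟨{ carrier := entangledSet E L I f σ
            add_mem' := ?_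
            zero_mem' := ?_
            smul_mem' := ?_
            lie_mem := ?_ }, rfl, ?_⟩
  · rintro a b ⟨ha₁, ha₂⟩ ⟨hb₁, hb₂⟩
    exact ⟨R.add_mem ha₁ hb₁, by rw [map_add, ha₂, hb₂, add_zero]⟩
  · exact ⟨R.zero_mem, map_zero _⟩
  · rintro c n ⟨hn₁, hn₂⟩
    exact ⟨hRsmul c hn₁, by rw [sigmaFLift_smul, hn₂, smul_zero]⟩
  · rintro z n ⟨hn₁, hn₂⟩
    exact ⟨hRlie z hn₁, by rw [sigmaFLift_lie, hn₂, lie_zero]⟩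
  · rintro a ⟨-, ha⟩
    rw [sigmaFLift_tmul, map_one, one_smul] at ha
    exact (LinearEquiv.map_eq_zero_iff f.toLinearEquiv).mp ha
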